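/- Let q = (τ⁺, τ⁻, ℘) be a couple and let m, n be nodes of q with m ≠ n and m ∼ n. Then m and n belong to different trees (one is a node of τ⁺ and the other a node of τ⁻) and have opposite signs, ι_m = −ι_n. Moreover, if h is a node of q with m ∼ n ∼ h, then h ∈ {m, n}. Consequently, every conjugacy class of the relation ∼ on the nodes of q contains either one or two nodes. -/

import Mathlib

noncomputable section
open scoped Classical

namespace WickNLS

/-! ## Ternary trees, signed ternary trees and couples -/

/-- Ternary trees: every non-leaf (branching) node has three ordered children. -/
inductive TTree : Type
  | leaf : TTree
  | node : TTree → TTree → TTree → TTree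
deriving DecidableEq

namespace TTree

/-- The order of a ternary tree: the number of its branching nodes. -/
def order : TTree → ℕ
  | leaf => 0
  | node a b c => order a + order b + order c + 1

/-- The subtree of `t` at the path `p` from the root (child indices `0,1,2` denote the
left, middle and right child, respectively), if `p` is a valid path. -/
def sub : TTree → List (Fin 3) → Option TTree
  | t, [] => some t
  | leaf, _ :: _ => none
  | node a b c, i :: p => sub (if i = 0 then a else if i = 1 then b else c) p

/-- `p` is (the path of) a node of `t`. -/
def valid (t : TTree) (p : List (Fin 3)) : Prop := (t.sub p).isSome = true

/-- `p` is (the path of) a leaf node of `t`. -/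
def isLeaf (t : TTree) (p : List (Fin 3)) : Prop := t.sub p = some leaf

/-- `p` is (the path of) a branching node of `t`. -/
def isBranch (t : TTree) (p : List (Fin 3)) : Prop := ∃ a b c, t.sub p = some (node a b c)

/-- Replace the subtree at the path `p` by `r`. -/
def replace : TTree → List (Fin 3) → TTree → TTree
  | _, [], r => r
  | leaf, _ :: _, _ => leaf
  | node a b c, i :: p, r =>
      if i = 0 then node (replace a p r) b c
      else if i = 1 then node a (replace b p r) c
      else node a b (replace c p r)

end TTree

/-- The sign `ι` of the node at path `p` of a signed ternary tree whose root carries the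
sign `σ`: because `ι_{b[j]} = ι_b · (-1)^(j+1)`, the sign is kept by the two outer
children and flipped by the middle child. -/
def nodeSign (σ : ℤ) (p : List (Fin 3)) : ℤ := σ * (-1) ^ (p.count (1 : Fin 3))

/-- Nodes of a couple: `(true, p)` is the node at path `p` of the positive tree `τ⁺`,
and `(false, p)` is the node at path `p` of the negative tree `τ⁻`. -/
abbrev CNode : Type := Bool × List (Fin 3)

/-- The (raw data of a) couple `(τ⁺, τ⁻, ℘)`: a positive tree `tp`, a negative tree `tm`,
the pairing `pr` sending each leaf of `tp` to its partner leaf of `tm`, and the inverse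
pairing `pl`. -/
structure Couple : Type where
  tp : TTree
  tm : TTree
  pr : List (Fin 3) → List (Fin 3)
  pl : List (Fin 3) → List (Fin 3)

namespace Couple

/-- The tree of the given side of the couple (`true` ↦ positive tree). -/
def tree (q : Couple) (b : Bool) : TTree := if b then q.tp else q.tm

/-- The sign of a node of a couple (the root of `τ⁺` has sign `+1`, that of `τ⁻` has
sign `-1`). -/
def sign (x : CNode) : ℤ := nodeSign (if x.1 then 1 else -1) x.2

/-- `x` is a node of the couple `q`. -/
def isNode (q : Couple) (x : CNode) : Prop := (q.tree x.1).valid x.2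

/-- `x` is a leaf of the couple `q`. -/
def isLeafN (q : Couple) (x : CNode) : Prop := (q.tree x.1).isLeaf x.2

/-- `x` is a branching node of the couple `q`. -/
def isBranchN (q : Couple) (x : CNode) : Prop := (q.tree x.1).isBranch x.2

/-- Well-formedness of a couple: the two trees have the same order; `pr` is a bijection
(with inverse `pl`) from the leaves of the positive tree onto the leaves of the negative
tree, pairing leaves of opposite signs.  The fields `pr_norm` and `pl_norm` normalize the
(irrelevant) values of `pr` and `pl` off their domains, so that equality of raw couples
is equality of couples. -/
structure IsCouple (q : Couple) : Prop where
  order_eq : q.tp.order = q.tm.order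
  pr_leaf : ∀ l, q.tp.isLeaf l → q.tm.isLeaf (q.pr l)
  pl_leaf : ∀ l, q.tm.isLeaf l → q.tp.isLeaf (q.pl l)
  pl_pr : ∀ l, q.tp.isLeaf l → q.pl (q.pr l) = l
  pr_pl : ∀ l, q.tm.isLeaf l → q.pr (q.pl l) = l
  sign_pr : ∀ l, q.tp.isLeaf l → sign (false, q.pr l) = - sign (true, l)
  pr_norm : ∀ l, ¬ q.tp.isLeaf l → q.pr l = []
  pl_norm : ∀ l, ¬ q.tm.isLeaf l → q.pl l = []

/-- The set `A_p` attached to the leaf pair `p = {(true, l), (false, q.pr l)}`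
(indexed by the leaf `l` of the positive tree): the set of all nodes `m` of `q` with
`m ⪰ (true, l)` or `m ⪰ (false, q.pr l)`, i.e. all weak ancestors of the two
paired leaves. -/
def pairSet (q : Couple) (l : List (Fin 3)) : Set CNode :=
  {x | (x.1 = true ∧ x.2 <+: l) ∨ (x.1 = false ∧ x.2 <+: q.pr l)}

/-- Two nodes `x, y` of `q` are conjugate, `x ∼ y`, if for every leaf pair `p ∈ ℘`
either both belong to `A_p` or neither does. -/
def Conj (q : Couple) (x y : CNode) : Prop :=
  ∀ l, q.tp.isLeaf l →
    ((x ∈ q.pairSet l ∧ y ∈ q.pairSet l) ∨ (x ∉ q.pairSet l ∧ y ∉ q.pairSet l))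

/-- The leaf of the leaf pair indexed by the `tp`-leaf `l` carrying the sign `+1`. -/
def posLeaf (q : Couple) (l : List (Fin 3)) : CNode :=
  if sign (true, l) = 1 then ((true, l) : CNode) else ((false, q.pr l) : CNode)

/-- The leaf of the leaf pair indexed by the `tp`-leaf `l` carrying the sign `-1`. -/
def negLeaf (q : Couple) (l : List (Fin 3)) : CNode :=
  if sign (true, l) = 1 then ((false, q.pr l) : CNode) else ((true, l) : CNode)

end Couple

/-- `x` is a weak ancestor of `y` (i.e. `x ⪰ y` fails ... this states `y ⪯ x` in the
subtree order: `y` lies in the subtree rooted at `x`), as nodes of a couple. -/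
def anc (x y : CNode) : Prop := x.1 = y.1 ∧ x.2 <+: y.2

/-- The indicator `1_{x ⪰ y}` (i.e. `x` is a weak ancestor of `y`), with values in `ℤ`. -/
def ind1 (x y : CNode) : ℤ := if anc x y then 1 else 0

/-! ### Auxiliary machinery for Statement 0 -/

namespace TTree

theorem sub_append (t : TTree) (p r : List (Fin 3)) :
    t.sub (p ++ r) = (t.sub p).bind (fun s => s.sub r) := by
  induction p generalizing t with
  | nil => simp [sub]
  | cons i p ih =>
    cases t with
    | leaf => simp [sub]
    | node a b c => simp [sub, ih]

theorem exists_isLeaf (t : TTree) : ∃ l, t.isLeaf l := by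
  induction t with
  | leaf => exact ⟨[], rfl⟩
  | node a b c iha _ _ =>
    obtain ⟨l, hl⟩ := iha
    exact ⟨0 :: l, by simpa [isLeaf, sub] using hl⟩

theorem exists_isLeaf_prefix (t : TTree) (p : List (Fin 3)) (h : t.valid p) :
    ∃ l, p <+: l ∧ t.isLeaf l := by
  rw [valid] at h
  obtain ⟨s, hs⟩ := Option.isSome_iff_exists.1 h
  obtain ⟨l', hl'⟩ := exists_isLeaf s
  exact ⟨p ++ l', List.prefix_append _ _, by rw [isLeaf, sub_append, hs]; exact hl'⟩

/-- The list of (paths of) leaves of a ternary tree. -/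
def leaves : TTree → List (List (Fin 3))
  | leaf => [[]]
  | node a b c =>
      (a.leaves.map (List.cons 0)) ++ (b.leaves.map (List.cons 1)) ++
        (c.leaves.map (List.cons 2))

theorem mem_leaves {t : TTree} {l : List (Fin 3)} : l ∈ t.leaves ↔ t.isLeaf l := by
  induction t generalizing l with
  | leaf =>
    cases l with
    | nil => simp [leaves, isLeaf, sub]
    | cons i l => simp [leaves, isLeaf, sub]
  | node a b c iha ihb ihc =>
    cases l with
    | nil => simp [leaves, isLeaf, sub]
    | cons i l =>
      simp only [leaves, List.mem_append, List.mem_map, isLeaf, sub]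
      fin_cases i <;>
        simp [iha, ihb, ihc, isLeaf, List.cons.injEq, eq_comm]

theorem leaves_nodup (t : TTree) : t.leaves.Nodup := by
  induction t with
  | leaf => simp [leaves]
  | node a b c iha ihb ihc =>
    have inj : ∀ j : Fin 3, Function.Injective (List.cons j : List (Fin 3) → List (Fin 3)) :=
      fun j x y h => by injection h
    have disj : ∀ (i j : Fin 3), i ≠ j → ∀ (L M : List (List (Fin 3))),
        List.Disjoint (L.map (List.cons i)) (M.map (List.cons j)) := by
      intro i j hij L M x hx hy
      obtain ⟨u, -, rfl⟩ := List.mem_map.1 hx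
      obtain ⟨v, -, hv⟩ := List.mem_map.1 hy
      injection hv with h1 _
      exact hij h1.symm
    simp only [leaves]
    refine List.Nodup.append (List.Nodup.append ?_ ?_ ?_) ?_ ?_
    · exact iha.map (inj 0)
    · exact ihb.map (inj 1)
    · exact disj 0 1 (by decide) _ _
    · exact ihc.map (inj 2)
    · simp only [List.disjoint_append_left]
      exact ⟨disj 0 2 (by decide) _ _, disj 1 2 (by decide) _ _⟩

theorem nodeSign_cons (σ : ℤ) (i : Fin 3) (p : List (Fin 3)) :
    nodeSign σ (i :: p) = nodeSign (if i = 1 then -σ else σ) p := by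
  fin_cases i <;> simp [nodeSign, List.count_cons] <;> ring

theorem sumAll (t : TTree) : ∀ σ : ℤ, (t.leaves.map (nodeSign σ)).sum = σ := by
  induction t with
  | leaf => intro σ; simp [leaves, nodeSign]
  | node a b c iha ihb ihc =>
    intro σ
    simp only [leaves, List.map_append, List.map_map, List.sum_append]
    have e : ∀ (j : Fin 3), (nodeSign σ ∘ (List.cons j)) =
        nodeSign (if j = 1 then -σ else σ) := by
      intro j; funext l; simp [nodeSign_cons]
    rw [e 0, e 1, e 2]
    simp only [show ((0:Fin 3) = 1) = False from by simp, show ((1:Fin 3) = 1) = True from by simp,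
      show ((2:Fin 3) = 1) = False from by simp, if_true, if_false]
    rw [iha, ihb, ihc]
    ring

theorem sumSign (t : TTree) : ∀ (σ : ℤ) (p : List (Fin 3)), t.valid p →
    (t.leaves.map (fun l => nodeSign σ l * (if p <+: l then (1:ℤ) else 0))).sum
      = nodeSign σ p := by
  induction t with
  | leaf =>
    intro σ p hp
    cases p with
    | nil => simp [leaves, nodeSign]
    | cons i p => simp [valid, sub] at hp
  | node a b c iha ihb ihc =>
    intro σ p hp
    cases p with
    | nil =>
      have := sumAll (node a b c) σ
      simpa [List.nil_prefix, show nodeSign σ [] = σ by simp [nodeSign]] using this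
    | cons i p =>
      have hzero : ∀ (j : Fin 3), j ≠ i → ∀ (L : List (List (Fin 3))),
          (L.map ((fun l => nodeSign σ l * (if (i :: p) <+: l then (1:ℤ) else 0)) ∘
            (List.cons j))).sum = 0 := by
        intro j hj L
        apply List.sum_eq_zero
        intro x hx
        obtain ⟨u, -, rfl⟩ := List.mem_map.1 hx
        simp [List.cons_prefix_cons, hj.symm]
      have hmain : ∀ (j : Fin 3), ((fun l => nodeSign σ l *
            (if (j :: p) <+: l then (1:ℤ) else 0)) ∘ (List.cons j)) =
          (fun l => nodeSign (if j = 1 then -σ else σ) l * (if p <+: l then (1:ℤ) else 0)) := by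
        intro j; funext l
        simp [nodeSign_cons, List.cons_prefix_cons]
      simp only [leaves, List.map_append, List.map_map, List.sum_append]
      have hp' : ((if i = 0 then a else if i = 1 then b else c).sub p).isSome = true := by
        simpa [valid, sub] using hp
      by_cases h0 : i = 0
      · subst h0
        have e : (if (0 : Fin 3) = 1 then -σ else σ) = σ := if_neg (by decide)
        rw [hmain 0, hzero 1 (by decide), hzero 2 (by decide), e,
          iha σ p (by simpa [valid] using hp')]
        simp [nodeSign_cons]
      · by_cases h1 : i = 1
        · subst h1
          have e : (if (1 : Fin 3) = 1 then -σ else σ) = -σ := if_pos rfl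
          rw [hmain 1, hzero 0 (by decide), hzero 2 (by decide), e,
            ihb (-σ) p (by simpa [valid] using hp')]
          simp [nodeSign_cons]
        · have h2 : i = 2 := by omega
          subst h2
          have e : (if (2 : Fin 3) = 1 then -σ else σ) = σ := if_neg (by decide)
          rw [hmain 2, hzero 0 (by decide), hzero 1 (by decide), e,
            ihc σ p (by simpa [h0, h1, valid] using hp')]
          simp [nodeSign_cons]

end TTree

namespace Couple

theorem sign_true (p : List (Fin 3)) : sign ((true, p) : CNode) = nodeSign 1 p := by
  simp [sign]

theorem sign_false (p : List (Fin 3)) : sign ((false, p) : CNode) = - nodeSign 1 p := by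
  simp [sign, nodeSign]

theorem mem_pairSet_true (q : Couple) (p l : List (Fin 3)) :
    (((true, p) : CNode) ∈ q.pairSet l) ↔ p <+: l := by
  simp [pairSet]

theorem mem_pairSet_false (q : Couple) (p l : List (Fin 3)) :
    (((false, p) : CNode) ∈ q.pairSet l) ↔ p <+: q.pr l := by
  simp [pairSet]

theorem conj_refl (q : Couple) (x : CNode) : q.Conj x x := by
  intro l hl
  by_cases h : x ∈ q.pairSet l
  · exact Or.inl ⟨h, h⟩
  · exact Or.inr ⟨h, h⟩

theorem conj_symm (q : Couple) {x y : CNode} (h : q.Conj x y) : q.Conj y x := by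
  intro l hl
  rcases h l hl with ⟨h1, h2⟩ | ⟨h1, h2⟩
  · exact Or.inl ⟨h2, h1⟩
  · exact Or.inr ⟨h2, h1⟩

theorem conj_trans (q : Couple) {x y z : CNode} (h : q.Conj x y) (h' : q.Conj y z) :
    q.Conj x z := by
  intro l hl
  rcases h l hl with ⟨h1, h2⟩ | ⟨h1, h2⟩ <;> rcases h' l hl with ⟨h3, h4⟩ | ⟨h3, h4⟩
  · exact Or.inl ⟨h1, h4⟩
  · exact absurd h2 h3
  · exact absurd h3 h2
  · exact Or.inr ⟨h1, h4⟩

/-- The permutation between the leaves of `tm` and the images under `pr` of the leaves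
of `tp`. -/
theorem perm_pr (q : Couple) (hq : q.IsCouple) : (q.tp.leaves.map q.pr).Perm q.tm.leaves := by
  apply List.perm_of_nodup_nodup_toFinset_eq
  · refine (q.tp.leaves_nodup).map_on ?_
    intro x hx y hy hxy
    calc x = q.pl (q.pr x) := (hq.pl_pr x (TTree.mem_leaves.1 hx)).symm
      _ = q.pl (q.pr y) := by rw [hxy]
      _ = y := hq.pl_pr y (TTree.mem_leaves.1 hy)
  · exact q.tm.leaves_nodup
  · ext l'
    simp only [List.mem_toFinset, List.mem_map, TTree.mem_leaves]
    constructor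
    · rintro ⟨l, hl, rfl⟩; exact hq.pr_leaf l hl
    · intro h; exact ⟨q.pl l', hq.pl_leaf l' h, hq.pr_pl l' h⟩

/-- The weighted sum `F(x) = Σ_{p ∈ ℘} ι_{p⁺} · 1_{x ∈ A_p}`. -/
def Fsum (q : Couple) (x : CNode) : ℤ :=
  (q.tp.leaves.map (fun l =>
    Couple.sign ((true, l) : CNode) * (if x ∈ q.pairSet l then (1:ℤ) else 0))).sum

theorem Fconj (q : Couple) {m n : CNode} (hc : q.Conj m n) : q.Fsum m = q.Fsum n := by
  unfold Fsum
  congr 1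
  apply List.map_congr_left
  intro l hl
  rcases hc l (TTree.mem_leaves.1 hl) with ⟨h1, h2⟩ | ⟨h1, h2⟩ <;> simp [h1, h2]

theorem Ftrue (q : Couple) (pm : List (Fin 3)) (h : q.tp.valid pm) :
    q.Fsum ((true, pm) : CNode) = Couple.sign ((true, pm) : CNode) := by
  have key := TTree.sumSign q.tp 1 pm h
  rw [Fsum, sign_true, ← key]
  apply congrArg
  apply List.map_congr_left
  intro l hl
  rw [sign_true]
  congr 1
  simp [mem_pairSet_true]

theorem Ffalse (q : Couple) (hq : q.IsCouple) (pm : List (Fin 3)) (h : q.tm.valid pm) :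
    q.Fsum ((false, pm) : CNode) = - Couple.sign ((false, pm) : CNode) := by
  have step1 : q.Fsum ((false, pm) : CNode) =
      (q.tp.leaves.map ((fun l' => nodeSign 1 l' * (if pm <+: l' then (1:ℤ) else 0)) ∘
        q.pr)).sum := by
    rw [Fsum]
    apply congrArg
    apply List.map_congr_left
    intro l hl
    have hs := hq.sign_pr l (TTree.mem_leaves.1 hl)
    have h1 : Couple.sign ((true, l) : CNode) = nodeSign 1 (q.pr l) := by
      have := sign_false (q.pr l)
      rw [this] at hs
      linarith
    rw [h1]
    simp only [Function.comp_apply]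
    congr 1
    simp [mem_pairSet_false]
  rw [step1, ← List.map_map]
  rw [((q.perm_pr hq).map (fun l' => nodeSign 1 l' * (if pm <+: l' then (1:ℤ) else 0))).sum_eq]
  rw [TTree.sumSign q.tm 1 pm h, sign_false]
  ring

end Couple

namespace TTree

theorem sibling_leaf (t : TTree) {p : List (Fin 3)} {i : Fin 3} {r : List (Fin 3)}
    (h : t.valid (p ++ i :: r)) : ∃ l, t.isLeaf l ∧ p <+: l ∧ ¬ (p ++ i :: r) <+: l := by
  rw [valid, sub_append] at h
  obtain ⟨s, hs⟩ : ∃ s, t.sub p = some s := by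
    cases hsp : t.sub p with
    | none => rw [hsp] at h; simp at h
    | some s => exact ⟨s, rfl⟩
  rw [hs] at h
  simp only [Option.bind_some] at h
  cases s with
  | leaf => simp [sub] at h
  | node a b c =>
    obtain ⟨j, hij⟩ : ∃ j : Fin 3, j ≠ i := by
      fin_cases i
      exacts [⟨1, by decide⟩, ⟨0, by decide⟩, ⟨0, by decide⟩]
    set cj := if j = 0 then a else if j = 1 then b else c with hcj
    obtain ⟨l', hl'⟩ := exists_isLeaf cj
    refine ⟨p ++ j :: l', ?_, List.prefix_append _ _, ?_⟩
    · rw [isLeaf, sub_append, hs]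
      simp only [Option.bind_some, sub, ← hcj]
      exact hl'
    · intro hpre
      rw [List.prefix_append_right_inj] at hpre
      rw [List.cons_prefix_cons] at hpre
      exact hij (hpre.1.symm)

theorem distinct_leaf (t : TTree) {pm pn : List (Fin 3)} (hm : t.valid pm) (hn : t.valid pn)
    (hne : pm ≠ pn) : ∃ l, t.isLeaf l ∧ ¬ (pm <+: l ↔ pn <+: l) := by
  by_cases h1 : pm <+: pn
  · obtain ⟨r, rfl⟩ := h1
    cases r with
    | nil => simp at hne
    | cons i r =>
      obtain ⟨l, hl, hpre, hnot⟩ := sibling_leaf t hn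
      exact ⟨l, hl, fun h => hnot (h.1 hpre)⟩
  · by_cases h2 : pn <+: pm
    · obtain ⟨r, rfl⟩ := h2
      cases r with
      | nil => simp at hne
      | cons i r =>
        obtain ⟨l, hl, hpre, hnot⟩ := sibling_leaf t hm
        exact ⟨l, hl, fun h => hnot (h.2 hpre)⟩
    · obtain ⟨l, hpre, hl⟩ := exists_isLeaf_prefix t pm hm
      refine ⟨l, hl, fun h => ?_⟩
      rcases List.prefix_or_prefix_of_prefix hpre (h.1 hpre) with h' | h'
      · exact h1 h'
      · exact h2 h'

end TTree

namespace Couple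

theorem fst_ne (q : Couple) (hq : q.IsCouple) {m n : CNode} (hm : q.isNode m)
    (hn : q.isNode n) (hmn : m ≠ n) (hc : q.Conj m n) : m.1 ≠ n.1 := by
  intro h1
  obtain ⟨bm, pm⟩ := m
  obtain ⟨bn, pn⟩ := n
  simp only at h1
  subst h1
  have hpp : pm ≠ pn := fun h => hmn (by rw [h])
  simp only [isNode, tree] at hm hn
  cases bm with
  | true =>
    simp only [if_pos] at hm hn
    obtain ⟨l, hl, hiff⟩ := TTree.distinct_leaf q.tp hm hn hpp
    rcases hc l hl with ⟨h1, h2⟩ | ⟨h1, h2⟩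
    · rw [mem_pairSet_true] at h1 h2
      exact hiff ⟨fun _ => h2, fun _ => h1⟩
    · rw [mem_pairSet_true] at h1 h2
      exact hiff ⟨fun h => absurd h h1, fun h => absurd h h2⟩
  | false =>
    simp only [Bool.false_eq_true, if_neg, ite_false] at hm hn
    obtain ⟨l', hl', hiff⟩ := TTree.distinct_leaf q.tm hm hn hpp
    have hl : q.tp.isLeaf (q.pl l') := hq.pl_leaf l' hl'
    have hpr : q.pr (q.pl l') = l' := hq.pr_pl l' hl'
    rcases hc (q.pl l') hl with ⟨h1, h2⟩ | ⟨h1, h2⟩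
    · rw [mem_pairSet_false, hpr] at h1 h2
      exact hiff ⟨fun _ => h2, fun _ => h1⟩
    · rw [mem_pairSet_false, hpr] at h1 h2
      exact hiff ⟨fun h => absurd h h1, fun h => absurd h h2⟩

theorem sign_neg (q : Couple) (hq : q.IsCouple) {m n : CNode} (hm : q.isNode m)
    (hn : q.isNode n) (hmn : m ≠ n) (hc : q.Conj m n) :
    Couple.sign m = - Couple.sign n := by
  have hf := fst_ne q hq hm hn hmn hc
  have hF := q.Fconj hc
  obtain ⟨bm, pm⟩ := m
  obtain ⟨bn, pn⟩ := n
  simp only [isNode, tree] at hm hn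
  cases bm <;> cases bn
  · exact absurd rfl hf
  · simp only [Bool.false_eq_true, if_neg, ite_false, if_pos] at hm hn
    rw [q.Ffalse hq pm hm, q.Ftrue pn hn] at hF
    linarith
  · simp only [Bool.false_eq_true, if_neg, ite_false, if_pos] at hm hn
    rw [q.Ftrue pm hm, q.Ffalse hq pn hn] at hF
    linarith
  · exact absurd rfl hf

end Couple

/-- Distinct conjugate nodes of a couple belong to different trees and
have opposite signs; a conjugacy class contains at most two nodes; consequently every
conjugacy class contains either one or two nodes. -/
theorem statement0 (q : Couple) (hq : q.IsCouple) :
    (∀ m n : CNode, q.isNode m → q.isNode n → m ≠ n → q.Conj m n →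
      m.1 ≠ n.1 ∧ Couple.sign m = - Couple.sign n ∧
      ∀ h : CNode, q.isNode h → q.Conj n h → h = m ∨ h = n) ∧
    (∀ x : CNode, q.isNode x →
      {y : CNode | q.isNode y ∧ q.Conj x y}.ncard = 1 ∨
      {y : CNode | q.isNode y ∧ q.Conj x y}.ncard = 2) := by
  constructor
  · intro m n hm hn hmn hc
    refine ⟨Couple.fst_ne q hq hm hn hmn hc, Couple.sign_neg q hq hm hn hmn hc, ?_⟩
    intro h hh hnh
    by_contra hcon
    push_neg at hcon
    have hmh : q.Conj m h := Couple.conj_trans q hc hnh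
    have f1 := Couple.fst_ne q hq hm hn hmn hc
    have f2 := Couple.fst_ne q hq hn hh (Ne.symm hcon.2) hnh
    have f3 := Couple.fst_ne q hq hm hh (Ne.symm hcon.1) hmh
    revert f1 f2 f3
    cases m.1 <;> cases n.1 <;> cases h.1 <;> simp
  · intro x hx
    by_cases hone : ∀ y, q.isNode y → q.Conj x y → y = x
    · left
      have hset : {y : CNode | q.isNode y ∧ q.Conj x y} = {x} := by
        ext y
        simp only [Set.mem_setOf_eq, Set.mem_singleton_iff]
        constructor
        · rintro ⟨h1, h2⟩; exact hone y h1 h2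
        · rintro rfl; exact ⟨hx, Couple.conj_refl q _⟩
      rw [hset]
      exact Set.ncard_singleton x
    · right
      push_neg at hone
      obtain ⟨y, hy, hxy, hyx⟩ := hone
      have hset : {z : CNode | q.isNode z ∧ q.Conj x z} = {x, y} := by
        ext z
        simp only [Set.mem_setOf_eq, Set.mem_insert_iff, Set.mem_singleton_iff]
        constructor
        · rintro ⟨h1, h2⟩
          by_contra hz
          push_neg at hz
          have hyz : q.Conj y z := Couple.conj_trans q (Couple.conj_symm q hxy) h2
          have f1 := Couple.fst_ne q hq hx hy (Ne.symm hyx) hxy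
          have f2 := Couple.fst_ne q hq hx h1 (Ne.symm hz.1) h2
          have f3 := Couple.fst_ne q hq hy h1 (Ne.symm hz.2) hyz
          revert f1 f2 f3
          cases x.1 <;> cases y.1 <;> cases z.1 <;> simp
        · rintro (rfl | rfl)
          · exact ⟨hx, Couple.conj_refl q z⟩
          · exact ⟨hy, hxy⟩
      rw [hset]
      exact Set.ncard_pair (Ne.symm hyx)

end WickNLS

end
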